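/- Let φ1, φ2, X1, X2 be positive reals and β ∈ (0,1]. Define F(τ) = φ2·(1 − 1/(2·(X2 + τ))) + √( φ1·φ2·(X1 − β·τ)/(X2 + τ) ) on (−X2, X1/β). Then for every τ ∈ (−X2, 0], the derivative of F at τ is strictly negative if and only if (X1 − β·τ) + β·(X2 + τ) > √( φ2·(X1 − β·τ)/(φ1·(X2 + τ)) ), i.e., if and only if the post-transfer budgets X̄1 = X1 − β·τ and X̄2 = X2 + τ satisfy X̄1 + β·X̄2 > √(φ2·X̄1/(φ1·X̄2)). -/

import Mathlib

noncomputable section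

/-- In Case 2 with a negative transfer, the alliance payoff has strictly
negative derivative at `τ ∈ (-X2, 0]` iff the post-transfer budgets
`X̄1 = X1 − βτ`, `X̄2 = X2 + τ` satisfy `X̄1 + βX̄2 > √(φ2X̄1/(φ1X̄2))`. -/
theorem case2_alliance_deriv_neg_iff (φ1 φ2 X1 X2 β : ℝ)
    (hφ1 : 0 < φ1) (hφ2 : 0 < φ2) (hX1 : 0 < X1) (hX2 : 0 < X2)
    (hβ0 : 0 < β) (hβ1 : β ≤ 1) :
    ∀ τ ∈ Set.Ioc (-X2) (0 : ℝ),
      (deriv (fun τ : ℝ => φ2 * (1 - 1 / (2 * (X2 + τ))) +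
          Real.sqrt (φ1 * φ2 * (X1 - β * τ) / (X2 + τ))) τ < 0 ↔
        (X1 - β * τ) + β * (X2 + τ) >
          Real.sqrt (φ2 * (X1 - β * τ) / (φ1 * (X2 + τ)))) := by
  rintro τ ⟨hτ1, hτ2⟩
  have hu : 0 < X2 + τ := by linarith
  have hbt : β * τ ≤ 0 := mul_nonpos_of_nonneg_of_nonpos hβ0.le hτ2
  have hv : 0 < X1 - β * τ := by linarith
  have harg : 0 < φ1 * φ2 * (X1 - β * τ) / (X2 + τ) := by positivity
  set s := Real.sqrt (φ1 * φ2 * (X1 - β * τ) / (X2 + τ)) with hs_def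
  have hs : 0 < s := Real.sqrt_pos.mpr harg
  -- derivative computation
  have hid : HasDerivAt (fun τ : ℝ => X2 + τ) 1 τ := (hasDerivAt_id τ).const_add X2
  have h2 : HasDerivAt (fun τ : ℝ => 2 * (X2 + τ)) (2 * 1) τ := hid.const_mul 2
  have h2ne : 2 * (X2 + τ) ≠ 0 := by positivity
  have hinv : HasDerivAt (fun τ : ℝ => 1 / (2 * (X2 + τ)))
      (-(2 * 1) / (2 * (X2 + τ)) ^ 2) τ := by
    rw [show (fun τ : ℝ => 1 / (2 * (X2 + τ))) = (fun τ : ℝ => 2 * (X2 + τ))⁻¹ by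
      ext x; simp [one_div]]
    exact h2.inv h2ne
  have hA : HasDerivAt (fun τ : ℝ => φ2 * (1 - 1 / (2 * (X2 + τ))))
      (φ2 * (0 - -(2 * 1) / (2 * (X2 + τ)) ^ 2)) τ :=
    ((hasDerivAt_const τ (1 : ℝ)).sub hinv).const_mul φ2
  have hb : HasDerivAt (fun τ : ℝ => X1 - β * τ) (0 - β * 1) τ :=
    (hasDerivAt_const τ X1).sub ((hasDerivAt_id τ).const_mul β)
  have hn : HasDerivAt (fun τ : ℝ => φ1 * φ2 * (X1 - β * τ)) (φ1 * φ2 * (0 - β * 1)) τ :=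
    hb.const_mul (φ1 * φ2)
  have hq : HasDerivAt (fun τ : ℝ => φ1 * φ2 * (X1 - β * τ) / (X2 + τ))
      ((φ1 * φ2 * (0 - β * 1) * (X2 + τ) - φ1 * φ2 * (X1 - β * τ) * 1) / (X2 + τ) ^ 2) τ :=
    hn.div hid hu.ne'
  have hsq := hq.sqrt harg.ne'
  have hD : deriv (fun τ : ℝ => φ2 * (1 - 1 / (2 * (X2 + τ))) +
      Real.sqrt (φ1 * φ2 * (X1 - β * τ) / (X2 + τ))) τ
      = φ2 / (2 * (X2 + τ) ^ 2 * s) * (s - φ1 * (β * (X2 + τ) + (X1 - β * τ))) := by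
    rw [HasDerivAt.deriv (f := fun τ : ℝ => φ2 * (1 - 1 / (2 * (X2 + τ))) +
        Real.sqrt (φ1 * φ2 * (X1 - β * τ) / (X2 + τ))) (hA.add hsq), ← hs_def]
    have hs2 : s ^ 2 = φ1 * φ2 * (X1 - β * τ) / (X2 + τ) := Real.sq_sqrt harg.le
    field_simp
    nlinarith [hs2, sq_nonneg s, mul_pos hs hu]
  set t := Real.sqrt (φ2 * (X1 - β * τ) / (φ1 * (X2 + τ))) with ht_def
  have hst : s = φ1 * t := by
    rw [hs_def, ht_def,
      show φ1 * φ2 * (X1 - β * τ) / (X2 + τ)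
        = φ1 ^ 2 * (φ2 * (X1 - β * τ) / (φ1 * (X2 + τ))) by field_simp,
      Real.sqrt_mul (sq_nonneg φ1), Real.sqrt_sq hφ1.le]
  have hC : 0 < φ2 / (2 * (X2 + τ) ^ 2 * s) := by positivity
  have key : φ2 / (2 * (X2 + τ) ^ 2 * s) * (s - φ1 * (β * (X2 + τ) + (X1 - β * τ))) < 0 ↔
      s - φ1 * (β * (X2 + τ) + (X1 - β * τ)) < 0 := by
    constructor
    · intro h; nlinarith
    · intro h; exact mul_neg_of_pos_of_neg hC h
  rw [hD, key, sub_neg, hst, mul_lt_mul_iff_right₀ hφ1]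
  constructor <;> intro h <;> linarith
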